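/- For every integer ℓ ≥ 2, the oriented discrepancy of directed rooted subtrees of the star S_ℓ with ℓ leaves equals ⌈ℓ/2⌉ + 1. -/

import Mathlib

open SimpleGraph

namespace StarDisc

variable {ℓ : ℕ}

private abbrev SG (ℓ : ℕ) : SimpleGraph (Unit ⊕ Fin ℓ) := completeBipartiteGraph Unit (Fin ℓ)

private abbrev ctr (ℓ : ℕ) : Unit ⊕ Fin ℓ := Sum.inl ()

lemma adj_c_leaf (i : Fin ℓ) : (SG ℓ).Adj (ctr ℓ) (Sum.inr i) := by simp

lemma dist_c_leaf (i : Fin ℓ) : (SG ℓ).dist (ctr ℓ) (Sum.inr i) = 1 :=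
  dist_eq_one_iff_adj.2 (adj_c_leaf i)

lemma dist_leaf_c (j : Fin ℓ) : (SG ℓ).dist (Sum.inr j) (ctr ℓ) = 1 :=
  dist_eq_one_iff_adj.2 (adj_c_leaf j).symm

lemma dist_leaf_leaf {i j : Fin ℓ} (h : j ≠ i) :
    (SG ℓ).dist (Sum.inr j) (Sum.inr i) = 2 := by
  have h2 : (SG ℓ).dist (Sum.inr j) (Sum.inr i) ≤ 2 := by
    simpa using dist_le (Walk.cons (adj_c_leaf j).symm (Walk.cons (adj_c_leaf i) Walk.nil))
  have h0 : (SG ℓ).dist (Sum.inr j) (Sum.inr i) ≠ 0 := by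
    intro hc
    rcases dist_eq_zero_iff_eq_or_not_reachable.1 hc with he | hr
    · exact h (by simpa using he)
    · exact hr (Walk.cons (adj_c_leaf j).symm (Walk.cons (adj_c_leaf i) Walk.nil)).reachable
  have h1 : (SG ℓ).dist (Sum.inr j) (Sum.inr i) ≠ 1 := by
    intro hc
    have := dist_eq_one_iff_adj.1 hc
    simp at this
  omega


lemma mem_edgeSet_star {e : Sym2 (Unit ⊕ Fin ℓ)} (he : e ∈ (SG ℓ).edgeSet) :
    ∃ i : Fin ℓ, e = s(ctr ℓ, Sum.inr i) := by
  induction e with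
  | _ x y =>
    rw [mem_edgeSet] at he
    rcases x with x | i
    · rcases y with y | i
      · simp at he
      · exact ⟨i, rfl⟩
    · rcases y with y | i'
      · exact ⟨i, Sym2.eq_swap⟩
      · simp at he

lemma P_center (σ : (Unit ⊕ Fin ℓ) → (Unit ⊕ Fin ℓ) → Prop) (i : Fin ℓ) :
    (∃ x y, s(ctr ℓ, Sum.inr i) = s(x, y) ∧
      (SG ℓ).dist (ctr ℓ) y = (SG ℓ).dist (ctr ℓ) x + 1 ∧ σ x y)
    ↔ σ (ctr ℓ) (Sum.inr i) := by
  constructor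
  · rintro ⟨x, y, hxy, hd, hs⟩
    rcases Sym2.eq_iff.1 hxy with ⟨hx, hy⟩ | ⟨hx, hy⟩
    · subst hx; subst hy; exact hs
    · subst hx; subst hy
      rw [SimpleGraph.dist_self, dist_c_leaf] at hd
      omega
  · intro h
    exact ⟨_, _, rfl, by rw [SimpleGraph.dist_self, dist_c_leaf], h⟩

lemma P_leaf (σ : (Unit ⊕ Fin ℓ) → (Unit ⊕ Fin ℓ) → Prop) (j i : Fin ℓ) :
    (∃ x y, s(ctr ℓ, Sum.inr i) = s(x, y) ∧
      (SG ℓ).dist (Sum.inr j) y = (SG ℓ).dist (Sum.inr j) x + 1 ∧ σ x y)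
    ↔ (if i = j then σ (Sum.inr j) (ctr ℓ) else σ (ctr ℓ) (Sum.inr i)) := by
  by_cases hij : i = j
  · subst hij
    rw [if_pos rfl]
    constructor
    · rintro ⟨x, y, hxy, hd, hs⟩
      rcases Sym2.eq_iff.1 hxy with ⟨hx, hy⟩ | ⟨hx, hy⟩
      · subst hx; subst hy
        rw [SimpleGraph.dist_self, dist_leaf_c] at hd
        omega
      · subst hx; subst hy; exact hs
    · intro h
      exact ⟨_, _, Sym2.eq_swap, by rw [SimpleGraph.dist_self, dist_leaf_c], h⟩
  · rw [if_neg hij]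
    have hji : j ≠ i := fun h => hij h.symm
    constructor
    · rintro ⟨x, y, hxy, hd, hs⟩
      rcases Sym2.eq_iff.1 hxy with ⟨hx, hy⟩ | ⟨hx, hy⟩
      · subst hx; subst hy; exact hs
      · subst hx; subst hy
        rw [dist_leaf_c, dist_leaf_leaf hji] at hd
        omega
    · intro h
      exact ⟨_, _, rfl, by rw [dist_leaf_c, dist_leaf_leaf hji], h⟩

lemma f_inj : Function.Injective (fun i : Fin ℓ => s(ctr ℓ, Sum.inr i)) := by
  intro a b h
  simpa using Sym2.congr_right.1 h

lemma count_eq (S : (SG ℓ).Subgraph) (P : Sym2 (Unit ⊕ Fin ℓ) → Prop) :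
    {e ∈ S.edgeSet | P e}.ncard
      = {i : Fin ℓ | s(ctr ℓ, Sum.inr i) ∈ S.edgeSet ∧ P s(ctr ℓ, Sum.inr i)}.ncard := by
  have himg : {e ∈ S.edgeSet | P e}
      = (fun i : Fin ℓ => s(ctr ℓ, Sum.inr i)) ''
        {i : Fin ℓ | s(ctr ℓ, Sum.inr i) ∈ S.edgeSet ∧ P s(ctr ℓ, Sum.inr i)} := by
    ext e
    constructor
    · rintro ⟨he, hp⟩
      obtain ⟨i, rfl⟩ := mem_edgeSet_star (S.edgeSet_subset he)
      exact ⟨i, ⟨he, hp⟩, rfl⟩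
    · rintro ⟨i, ⟨he, hp⟩, rfl⟩
      exact ⟨he, hp⟩
  rw [himg, Set.ncard_image_of_injective _ f_inj]

lemma edge_count (S : (SG ℓ).Subgraph) :
    S.edgeSet.ncard = {i : Fin ℓ | s(ctr ℓ, Sum.inr i) ∈ S.edgeSet}.ncard := by
  have himg : S.edgeSet
      = (fun i : Fin ℓ => s(ctr ℓ, Sum.inr i)) ''
        {i : Fin ℓ | s(ctr ℓ, Sum.inr i) ∈ S.edgeSet} := by
    ext e
    constructor
    · intro he
      obtain ⟨i, rfl⟩ := mem_edgeSet_star (S.edgeSet_subset he)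
      exact ⟨i, he, rfl⟩
    · rintro ⟨i, he, rfl⟩
      exact he
  conv_lhs => rw [himg]
  rw [Set.ncard_image_of_injective _ f_inj]

lemma ncard_val_lt (t : ℕ) (ht : t ≤ ℓ) : {i : Fin ℓ | (i : ℕ) < t}.ncard = t := by
  have himg : {i : Fin ℓ | (i : ℕ) < t} = (Fin.castLE ht) '' Set.univ := by
    ext i
    simp only [Set.mem_setOf_eq, Set.image_univ, Set.mem_range]
    constructor
    · intro h
      exact ⟨⟨(i : ℕ), h⟩, by ext; simp⟩
    · rintro ⟨a, rfl⟩
      simpa using a.2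
  rw [himg, Set.ncard_image_of_injective _ (Fin.castLE_injective ht), Set.ncard_univ,
    Nat.card_eq_fintype_card, Fintype.card_fin]

lemma ncard_val_not_lt (t : ℕ) (ht : t ≤ ℓ) :
    {i : Fin ℓ | ¬ ((i : ℕ) < t)}.ncard = ℓ - t := by
  have h := Set.ncard_add_ncard_compl {i : Fin ℓ | (i : ℕ) < t}
  rw [ncard_val_lt t ht] at h
  have hc : {i : Fin ℓ | (i : ℕ) < t}ᶜ = {i : Fin ℓ | ¬ ((i : ℕ) < t)} := rfl
  rw [hc] at h
  have : Nat.card (Fin ℓ) = ℓ := by simp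
  omega


def starSub (A : Set (Fin ℓ)) : (SG ℓ).Subgraph where
  verts := {ctr ℓ} ∪ Sum.inr '' A
  Adj x y := (x = ctr ℓ ∧ ∃ i ∈ A, y = Sum.inr i) ∨ (y = ctr ℓ ∧ ∃ i ∈ A, x = Sum.inr i)
  adj_sub := by
    rintro x y (⟨rfl, i, hi, rfl⟩ | ⟨rfl, i, hi, rfl⟩) <;> simp
  edge_vert := by
    rintro x y (⟨rfl, _⟩ | ⟨_, i, hi, rfl⟩)
    · exact Or.inl rfl
    · exact Or.inr ⟨i, hi, rfl⟩
  symm := ⟨fun x y h => h.symm⟩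

lemma ctr_mem_starSub (A : Set (Fin ℓ)) : ctr ℓ ∈ (starSub A).verts := Or.inl rfl

lemma leaf_mem_starSub {A : Set (Fin ℓ)} {j : Fin ℓ} (hj : j ∈ A) :
    Sum.inr j ∈ (starSub A).verts := Or.inr ⟨j, hj, rfl⟩

lemma starSub_connected (A : Set (Fin ℓ)) : (starSub A).Connected := by
  rw [SimpleGraph.Subgraph.connected_iff]
  refine ⟨?_, ⟨ctr ℓ, ctr_mem_starSub A⟩⟩
  rw [SimpleGraph.Subgraph.preconnected_iff]
  have key : ∀ x (hx : x ∈ (starSub A).verts),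
      (starSub A).coe.Reachable ⟨x, hx⟩ ⟨ctr ℓ, ctr_mem_starSub A⟩ := by
    rintro (x | i) hx
    · have hx' : (⟨Sum.inl x, hx⟩ : (starSub A).verts) = ⟨ctr ℓ, ctr_mem_starSub A⟩ :=
        Subtype.ext rfl
      rw [hx']
    · have hi : i ∈ A := by
        rcases hx with h | ⟨i', hi', he⟩
        · simp at h
        · obtain rfl : i' = i := by injection he
          exact hi'
      exact SimpleGraph.Adj.reachable (Or.inr ⟨rfl, i, hi, rfl⟩)
  intro x y
  exact (key x.1 x.2).trans (key y.1 y.2).symm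

lemma starSub_edge (A : Set (Fin ℓ)) (i : Fin ℓ) :
    s(ctr ℓ, Sum.inr i) ∈ (starSub A).edgeSet ↔ i ∈ A := by
  rw [SimpleGraph.Subgraph.mem_edgeSet]
  constructor
  · rintro (⟨_, i', hi', he⟩ | ⟨h, _⟩)
    · obtain rfl : i = i' := by injection he
      exact hi'
    · simp at h
  · intro hi
    exact Or.inl ⟨rfl, i, hi, rfl⟩

lemma ceil_half (ℓ : ℕ) : (⌈(ℓ : ℚ) / 2⌉ : ℤ) = (((ℓ + 1) / 2 : ℕ) : ℤ) := by
  have h2 : (0:ℚ) < 2 := by norm_num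
  rw [Int.ceil_eq_iff]
  refine ⟨?_, ?_⟩
  · rw [lt_div_iff₀ h2]
    have h : ((((ℓ+1)/2 : ℕ) : ℤ) - 1) * 2 < (ℓ : ℤ) := by omega
    exact_mod_cast h
  · rw [div_le_iff₀ h2]
    have h : (ℓ : ℤ) ≤ (((ℓ+1)/2 : ℕ) : ℤ) * 2 := by omega
    exact_mod_cast h

lemma key_bound (A Q : Fin ℓ → Prop) (b : ℕ)
    (hF : {i : Fin ℓ | Q i}.ncard ≤ b) (hB : {i : Fin ℓ | ¬ Q i}.ncard ≤ b) :
    |2 * ({i : Fin ℓ | A i ∧ Q i}.ncard : ℤ) - ({i : Fin ℓ | A i}.ncard : ℤ)| ≤ (b : ℤ) := by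
  have h1 : {i : Fin ℓ | A i ∧ Q i}.ncard ≤ {i : Fin ℓ | Q i}.ncard :=
    Set.ncard_le_ncard (fun i hi => hi.2) (Set.toFinite _)
  have h2 : {i : Fin ℓ | A i ∧ ¬ Q i}.ncard ≤ {i : Fin ℓ | ¬ Q i}.ncard :=
    Set.ncard_le_ncard (fun i hi => hi.2) (Set.toFinite _)
  have h3 : {i : Fin ℓ | A i ∧ Q i}.ncard + {i : Fin ℓ | A i ∧ ¬ Q i}.ncard
      = {i : Fin ℓ | A i}.ncard := by
    classical
    rw [← Set.ncard_union_eq ?_ (Set.toFinite _) (Set.toFinite _)]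
    · congr 1
      ext i
      simp only [Set.mem_union, Set.mem_setOf_eq]
      tauto
    · rw [Set.disjoint_left]
      rintro i ⟨_, hq⟩ ⟨_, hq'⟩
      exact hq' hq
  rw [abs_le]
  omega

lemma ncard_le_union_singleton {s u : Set (Fin ℓ)} {j : Fin ℓ} (h : s ⊆ u ∪ {j}) :
    s.ncard ≤ u.ncard + 1 := by
  calc s.ncard ≤ (u ∪ {j}).ncard := Set.ncard_le_ncard h (Set.toFinite _)
    _ ≤ u.ncard + ({j} : Set (Fin ℓ)).ncard := Set.ncard_union_le _ _
    _ = u.ncard + 1 := by rw [Set.ncard_singleton]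

def sigma0 (ℓ t : ℕ) : (Unit ⊕ Fin ℓ) → (Unit ⊕ Fin ℓ) → Prop
  | Sum.inl _, Sum.inr i => (i : ℕ) < t
  | Sum.inr i, Sum.inl _ => ¬ ((i : ℕ) < t)
  | _, _ => False

end StarDisc


/-- **Oriented discrepancy of the star.**
For every `ℓ ≥ 2`, the oriented discrepancy of directed rooted subtrees of the star `S_ℓ`
with `ℓ` leaves equals `⌈ℓ/2⌉ + 1`: some orientation has all rooted-subtree oriented
imbalances at most `⌈ℓ/2⌉ + 1`, and every orientation admits a rooted subtree with oriented
imbalance at least `⌈ℓ/2⌉ + 1`. -/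
theorem star_oriented_discrepancy_eq (ℓ : ℕ) (hℓ : 2 ≤ ℓ) :
    (∃ σ : (Unit ⊕ Fin ℓ) → (Unit ⊕ Fin ℓ) → Prop,
      (∀ u v, (completeBipartiteGraph Unit (Fin ℓ)).Adj u v → (σ u v ↔ ¬ σ v u)) ∧
      ∀ S : (completeBipartiteGraph Unit (Fin ℓ)).Subgraph, S.Connected → ∀ u ∈ S.verts,
        |2 * (({e ∈ S.edgeSet | ∃ x y, e = s(x, y) ∧
              (completeBipartiteGraph Unit (Fin ℓ)).dist u y =
                (completeBipartiteGraph Unit (Fin ℓ)).dist u x + 1 ∧ σ x y} :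
              Set (Sym2 (Unit ⊕ Fin ℓ))).ncard : ℤ)
          - (S.edgeSet.ncard : ℤ)| ≤ (⌈(ℓ : ℚ) / 2⌉ : ℤ) + 1) ∧
    (∀ σ : (Unit ⊕ Fin ℓ) → (Unit ⊕ Fin ℓ) → Prop,
      (∀ u v, (completeBipartiteGraph Unit (Fin ℓ)).Adj u v → (σ u v ↔ ¬ σ v u)) →
      ∃ S : (completeBipartiteGraph Unit (Fin ℓ)).Subgraph, S.Connected ∧ ∃ u ∈ S.verts,
        (⌈(ℓ : ℚ) / 2⌉ : ℤ) + 1 ≤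
          |2 * (({e ∈ S.edgeSet | ∃ x y, e = s(x, y) ∧
              (completeBipartiteGraph Unit (Fin ℓ)).dist u y =
                (completeBipartiteGraph Unit (Fin ℓ)).dist u x + 1 ∧ σ x y} :
              Set (Sym2 (Unit ⊕ Fin ℓ))).ncard : ℤ)
            - (S.edgeSet.ncard : ℤ)|) := by
  classical
  have hceil : (⌈(ℓ : ℚ) / 2⌉ : ℤ) = (((ℓ + 1) / 2 : ℕ) : ℤ) := StarDisc.ceil_half ℓ
  rw [hceil]
  set t : ℕ := (ℓ + 1) / 2 with ht
  have htℓ : t ≤ ℓ := by omega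
  constructor
  · refine ⟨StarDisc.sigma0 ℓ t, ?_, ?_⟩
    · rintro (x | i) (y | j) hadj
      · simp at hadj
      · simp [StarDisc.sigma0]
      · simp [StarDisc.sigma0]
      · simp at hadj
    · intro S hS u hu
      rw [StarDisc.count_eq, StarDisc.edge_count]
      rcases u with u | j
      · cases u
        simp only [StarDisc.P_center, StarDisc.sigma0]
        apply StarDisc.key_bound
        · rw [StarDisc.ncard_val_lt t htℓ]
          omega
        · rw [StarDisc.ncard_val_not_lt t htℓ]
          omega
      · simp only [StarDisc.P_leaf, StarDisc.sigma0]
        apply StarDisc.key_bound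
        · have hsub : {i : Fin ℓ | if i = j then ¬ ((j : ℕ) < t) else (i : ℕ) < t}
              ⊆ {i : Fin ℓ | (i : ℕ) < t} ∪ {j} := by
            intro i hi
            by_cases h : i = j
            · exact Or.inr h
            · left
              simpa [h] using hi
          have h := StarDisc.ncard_le_union_singleton hsub
          rw [StarDisc.ncard_val_lt t htℓ] at h
          exact h
        · have hsub : {i : Fin ℓ | ¬ (if i = j then ¬ ((j : ℕ) < t) else (i : ℕ) < t)}
              ⊆ {i : Fin ℓ | ¬ ((i : ℕ) < t)} ∪ {j} := by
            intro i hi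
            by_cases h : i = j
            · exact Or.inr h
            · left
              simp only [Set.mem_setOf_eq, if_neg h] at hi
              exact hi
          have h := StarDisc.ncard_le_union_singleton hsub
          rw [StarDisc.ncard_val_not_lt t htℓ] at h
          have h2 : ℓ - t + 1 ≤ t + 1 := by omega
          exact h.trans h2
  · intro σ hσ
    have hsig : ∀ j : Fin ℓ, σ (Sum.inr j) (Sum.inl ()) ↔ ¬ σ (Sum.inl ()) (Sum.inr j) := by
      intro j
      have h := hσ (Sum.inl ()) (Sum.inr j) (by simp)
      tauto
    set K : Set (Fin ℓ) := {i : Fin ℓ | σ (Sum.inl ()) (Sum.inr i)} with hK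
    have hkℓ : K.ncard ≤ ℓ := by
      have h := Set.ncard_le_ncard (Set.subset_univ K) (Set.toFinite _)
      rwa [Set.ncard_univ, Nat.card_eq_fintype_card, Fintype.card_fin] at h
    have hcompl : K.ncard + Kᶜ.ncard = ℓ := by
      have h := Set.ncard_add_ncard_compl K
      rwa [Nat.card_eq_fintype_card, Fintype.card_fin] at h
    by_cases hKu : K = Set.univ
    · refine ⟨StarDisc.starSub Set.univ, StarDisc.starSub_connected _, Sum.inl (),
        StarDisc.ctr_mem_starSub _, ?_⟩
      rw [StarDisc.count_eq, StarDisc.edge_count]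
      simp only [StarDisc.P_center, StarDisc.starSub_edge]
      have e1 : {i : Fin ℓ | i ∈ (Set.univ : Set (Fin ℓ)) ∧ σ (Sum.inl ()) (Sum.inr i)}
          = Set.univ := by
        ext i
        simp only [Set.mem_setOf_eq, Set.mem_univ, true_and, iff_true]
        show i ∈ K
        rw [hKu]
        exact Set.mem_univ i
      have e2 : {i : Fin ℓ | i ∈ (Set.univ : Set (Fin ℓ))} = Set.univ := by
        ext i; simp
      rw [e1, e2, Set.ncard_univ, Nat.card_eq_fintype_card, Fintype.card_fin]
      rw [show 2 * (ℓ:ℤ) - (ℓ:ℤ) = (ℓ:ℤ) by ring, abs_of_nonneg (by positivity)]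
      omega
    · by_cases hKe : K = ∅
      · refine ⟨StarDisc.starSub Set.univ, StarDisc.starSub_connected _, Sum.inl (),
          StarDisc.ctr_mem_starSub _, ?_⟩
        rw [StarDisc.count_eq, StarDisc.edge_count]
        simp only [StarDisc.P_center, StarDisc.starSub_edge]
        have e1 : {i : Fin ℓ | i ∈ (Set.univ : Set (Fin ℓ)) ∧ σ (Sum.inl ()) (Sum.inr i)}
            = (∅ : Set (Fin ℓ)) := by
          ext i
          simp only [Set.mem_setOf_eq, Set.mem_univ, true_and, Set.mem_empty_iff_false,
            iff_false]
          intro h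
          have : i ∈ K := h
          rw [hKe] at this
          exact this
        have e2 : {i : Fin ℓ | i ∈ (Set.univ : Set (Fin ℓ))} = Set.univ := by
          ext i; simp
        rw [e1, e2, Set.ncard_univ, Nat.card_eq_fintype_card, Fintype.card_fin,
          Set.ncard_empty]
        rw [show 2 * ((0:ℕ):ℤ) - (ℓ:ℤ) = -(ℓ:ℤ) by push_cast; ring, abs_neg,
          abs_of_nonneg (by positivity)]
        omega
      · by_cases hk : ℓ ≤ 2 * K.ncard
        · obtain ⟨j0, hj0⟩ := (Set.ne_univ_iff_exists_notMem K).1 hKu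
          refine ⟨StarDisc.starSub (insert j0 K), StarDisc.starSub_connected _, Sum.inr j0,
            StarDisc.leaf_mem_starSub (Set.mem_insert j0 K), ?_⟩
          rw [StarDisc.count_eq, StarDisc.edge_count]
          simp only [StarDisc.P_leaf, StarDisc.starSub_edge]
          have e1 : {i : Fin ℓ | i ∈ insert j0 K ∧
              (if i = j0 then σ (Sum.inr j0) (StarDisc.ctr ℓ) else σ (StarDisc.ctr ℓ) (Sum.inr i))}
              = insert j0 K := by
            ext i
            simp only [Set.mem_setOf_eq]
            constructor
            · exact fun h => h.1
            · intro hi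
              refine ⟨hi, ?_⟩
              by_cases h : i = j0
              · subst h
                rw [if_pos rfl]
                exact (hsig i).2 hj0
              · rw [if_neg h]
                rcases Set.mem_insert_iff.1 hi with h' | h'
                · exact absurd h' h
                · exact h'
          have e2 : {i : Fin ℓ | i ∈ insert j0 K} = insert j0 K := by
            ext i; simp only [Set.mem_setOf_eq]
          rw [e1, e2, Set.ncard_insert_of_notMem hj0 (Set.toFinite _)]
          rw [show 2 * ((K.ncard + 1 : ℕ):ℤ) - ((K.ncard + 1 : ℕ):ℤ) = ((K.ncard + 1 : ℕ):ℤ)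
            by ring, abs_of_nonneg (by positivity)]
          have : t ≤ K.ncard := by omega
          omega
        · obtain ⟨j0, hj0⟩ := Set.nonempty_iff_ne_empty.2 hKe
          have hj0c : j0 ∉ Kᶜ := fun h => h hj0
          refine ⟨StarDisc.starSub (insert j0 Kᶜ), StarDisc.starSub_connected _, Sum.inr j0,
            StarDisc.leaf_mem_starSub (Set.mem_insert j0 Kᶜ), ?_⟩
          rw [StarDisc.count_eq, StarDisc.edge_count]
          simp only [StarDisc.P_leaf, StarDisc.starSub_edge]
          have e1 : {i : Fin ℓ | i ∈ insert j0 Kᶜ ∧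
              (if i = j0 then σ (Sum.inr j0) (StarDisc.ctr ℓ) else σ (StarDisc.ctr ℓ) (Sum.inr i))}
              = (∅ : Set (Fin ℓ)) := by
            ext i
            simp only [Set.mem_setOf_eq, Set.mem_empty_iff_false, iff_false, not_and]
            intro hi
            by_cases h : i = j0
            · subst h
              rw [if_pos rfl]
              intro hcon
              exact ((hsig i).1 hcon) hj0
            · rw [if_neg h]
              rcases Set.mem_insert_iff.1 hi with h' | h'
              · exact absurd h' h
              · exact h'
          have e2 : {i : Fin ℓ | i ∈ insert j0 Kᶜ} = insert j0 Kᶜ := by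
            ext i; simp only [Set.mem_setOf_eq]
          rw [e1, e2, Set.ncard_insert_of_notMem hj0c (Set.toFinite _), Set.ncard_empty]
          rw [show 2 * ((0:ℕ):ℤ) - ((Kᶜ.ncard + 1 : ℕ):ℤ) = -((Kᶜ.ncard + 1 : ℕ):ℤ)
            by push_cast; ring, abs_neg, abs_of_nonneg (by positivity)]
          have : t ≤ Kᶜ.ncard := by omega
          omega
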